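/- Assume in addition that C is braided monoidal, and let n ≥ 0. Then the class Pol_n of strong polynomial functors of degree ≤ n is closed under the following operations: (1) translation: if F ∈ Pol_n then τ_x(F) ∈ Pol_n for every object x of C; (2) quotients: if F ∈ Pol_n and F → G is an epimorphism in Fct(C, A), then G ∈ Pol_n; (3) extensions: if 0 → F → G → H → 0 is a short exact sequence in Fct(C, A) with F ∈ Pol_n and H ∈ Pol_n, then G ∈ Pol_n. -/

import Mathlib

open CategoryTheory CategoryTheory.Limits CategoryTheory.MonoidalCategory

variable {C : Type*} [Category C] [MonoidalCategory C]
variable {A : Type*} [Category A] [Abelian A]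

/-- The translation endofunctor `τ_x` of `Fct(C, A)`: precomposition with `x ⊗ -`. -/
noncomputable def tauF (A : Type*) [Category A] (x : C) : (C ⥤ A) ⥤ (C ⥤ A) :=
  (Functor.whiskeringLeft C C A).obj (tensorLeft x)

/-- The component `i_x(F) : F ⟶ τ_x F`, whose component at `c` is
`F` applied to `c ≅ 𝟙 ⊗ c ⟶ x ⊗ c`. -/
def iApp (hI : IsInitial (𝟙_ C)) (x : C) (F : C ⥤ A) : F ⟶ tensorLeft x ⋙ F where
  app c := F.map ((λ_ c).inv ≫ hI.to x ▷ c)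
  naturality c c' f := by
    dsimp
    rw [← F.map_comp, ← F.map_comp]
    congr 1
    rw [leftUnitor_inv_naturality_assoc, whisker_exchange, Category.assoc]

/-- The natural transformation `i_x : Id ⟶ τ_x` of endofunctors of `Fct(C, A)`. -/
noncomputable def iNT (hI : IsInitial (𝟙_ C)) (x : C) :
    𝟭 (C ⥤ A) ⟶ tauF A x where
  app F := iApp hI x F
  naturality F G η := by
    ext c
    exact (η.naturality _).symm

/-- The evanescence endofunctor `κ_x = ker(i_x)` of `Fct(C, A)`. -/
noncomputable def kappaF (hI : IsInitial (𝟙_ C)) (x : C) : (C ⥤ A) ⥤ (C ⥤ A) :=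
  kernel (iNT (A := A) hI x)

/-- The difference endofunctor `δ_x = coker(i_x)` of `Fct(C, A)`. -/
noncomputable def deltaF (hI : IsInitial (𝟙_ C)) (x : C) : (C ⥤ A) ⥤ (C ⥤ A) :=
  cokernel (iNT (A := A) hI x)

/-- `PolAux hI (n+1) F` says that `F` is strong polynomial of degree `≤ n`;
`PolAux hI 0 F` says that `F` is the zero functor (degree `≤ -1`). -/
def PolAux (hI : IsInitial (𝟙_ C)) : ℕ → (C ⥤ A) → Prop
  | 0 => fun F => IsZero F
  | n + 1 => fun F => ∀ x : C, PolAux hI n ((deltaF hI x).obj F)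

/-- `Pol hI n F` : `F` is strong polynomial of degree `≤ n` (with `Pol_m = {0}` for `m < 0`). -/
def Pol (hI : IsInitial (𝟙_ C)) (n : ℤ) (F : C ⥤ A) : Prop :=
  PolAux hI (n + 1).toNat F
open CategoryTheory CategoryTheory.Limits CategoryTheory.MonoidalCategory

-- abstract cokernel-row lemmas in an abelian category
namespace PolClosureAux

variable {B : Type*} [Category B] [Abelian B]

noncomputable def rq1 {S T : ShortComplex B} (v : S ⟶ T) : cokernel v.τ₁ ⟶ cokernel v.τ₂ :=
  cokernel.map v.τ₁ v.τ₂ S.f T.f v.comm₁₂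

noncomputable def rq2 {S T : ShortComplex B} (v : S ⟶ T) : cokernel v.τ₂ ⟶ cokernel v.τ₃ :=
  cokernel.map v.τ₂ v.τ₃ S.g T.g v.comm₂₃

lemma rq_w {S T : ShortComplex B} (v : S ⟶ T) : rq1 v ≫ rq2 v = 0 := by
  rw [← cancel_epi (cokernel.π v.τ₁)]
  simp [rq1, rq2]

lemma rq2_epi {S T : ShortComplex B} (v : S ⟶ T) (hTg : Epi T.g) : Epi (rq2 v) := by
  have h : cokernel.π v.τ₂ ≫ rq2 v = T.g ≫ cokernel.π v.τ₃ := by simp [rq2]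
  have : Epi (cokernel.π v.τ₂ ≫ rq2 v) := by rw [h]; exact epi_comp _ _
  exact epi_of_epi (cokernel.π v.τ₂) (rq2 v)

noncomputable def rq2_isCokernel {S T : ShortComplex B} (v : S ⟶ T)
    (hSg : Epi S.g) (hT : T.Exact) (hTg : Epi T.g) :
    IsColimit (CokernelCofork.ofπ (rq2 v) (rq_w v)) := by
  have : Epi T.g := hTg
  refine CokernelCofork.IsColimit.ofπ _ _
    (fun {Z'} g' hg' => cokernel.desc _ (hT.desc (cokernel.π v.τ₂ ≫ g') ?_) ?_) ?_ ?_
  · rw [← Category.assoc]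
    have h1 : T.f ≫ cokernel.π v.τ₂ = cokernel.π v.τ₁ ≫ rq1 v := by simp [rq1]
    rw [h1, Category.assoc, hg', comp_zero]
  · rw [← cancel_epi S.g]
    have h2 : S.g ≫ v.τ₃ = v.τ₂ ≫ T.g := v.comm₂₃.symm
    rw [reassoc_of% h2, hT.g_desc, cokernel.condition_assoc, zero_comp, comp_zero]
  · intro Z' g' hg'
    rw [← cancel_epi (cokernel.π v.τ₂)]
    have h : cokernel.π v.τ₂ ≫ rq2 v = T.g ≫ cokernel.π v.τ₃ := by simp [rq2]
    rw [reassoc_of% h, cokernel.π_desc, hT.g_desc]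
  · intro Z' g' hg' m hm
    have h : cokernel.π v.τ₂ ≫ rq2 v = T.g ≫ cokernel.π v.τ₃ := by simp [rq2]
    rw [← cancel_epi (cokernel.π v.τ₃), cokernel.π_desc, ← cancel_epi T.g, hT.g_desc,
      ← hm, ← reassoc_of% h]

lemma row_exact {S T : ShortComplex B} (v : S ⟶ T)
    (hSg : Epi S.g) (hT : T.Exact) (hTg : Epi T.g) :
    (ShortComplex.mk (rq1 v) (rq2 v) (rq_w v)).Exact :=
  ShortComplex.exact_of_g_is_cokernel _ (rq2_isCokernel v hSg hT hTg)

end PolClosureAux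

namespace PolClosureAux

variable {C : Type*} [Category C] [MonoidalCategory C]
variable {A : Type*} [Category A] [Abelian A]

instance tauF_pzero (x : C) : (tauF A x).PreservesZeroMorphisms where
  map_zero F G := by ext c; rfl

noncomputable instance tauF_pfl (x : C) : PreservesFiniteLimits (tauF A x) :=
  ⟨fun J _ _ => by unfold tauF; infer_instance⟩

noncomputable instance tauF_pfc (x : C) : PreservesFiniteColimits (tauF A x) :=
  ⟨fun J _ _ => by unfold tauF; infer_instance⟩

noncomputable def deltaObjIso (hI : IsInitial (𝟙_ C)) (x : C) (F : C ⥤ A) :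
    (deltaF (A := A) hI x).obj F ≅ cokernel (iApp hI x F) :=
  PreservesCokernel.iso ((evaluation (C ⥤ A) (C ⥤ A)).obj F) (iNT (A := A) hI x)

lemma polAux_zero (hI : IsInitial (𝟙_ C)) (F : C ⥤ A) : PolAux hI 0 F ↔ IsZero F := Iff.rfl

lemma polAux_succ (hI : IsInitial (𝟙_ C)) (n : ℕ) (F : C ⥤ A) :
    PolAux hI (n + 1) F ↔ ∀ x : C, PolAux hI n ((deltaF hI x).obj F) := Iff.rfl

lemma polAux_of_iso (hI : IsInitial (𝟙_ C)) :
    ∀ (n : ℕ) {F G : C ⥤ A}, (F ≅ G) → PolAux hI n F → PolAux hI n G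
  | 0, F, G, e, h => h.of_iso e.symm
  | n + 1, F, G, e, h => fun x => polAux_of_iso hI n ((deltaF hI x).mapIso e) (h x)

end PolClosureAux

namespace PolClosureAux

variable {C : Type*} [Category C] [MonoidalCategory C]
variable {A : Type*} [Category A] [Abelian A]

lemma key [BraidedCategory C] (hI : IsInitial (𝟙_ C)) (x y c : C) :
    (λ_ (y ⊗ c)).inv ≫ hI.to x ▷ (y ⊗ c) ≫ (α_ x y c).inv ≫ (β_ x y).hom ▷ c ≫ (α_ y x c).hom
      = y ◁ ((λ_ c).inv ≫ hI.to x ▷ c) := by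
  rw [associator_inv_naturality_left_assoc, ← comp_whiskerRight_assoc,
    BraidedCategory.braiding_naturality_left]
  have hb : (β_ (𝟙_ C) y).hom = (λ_ y).hom ≫ (ρ_ y).inv := by
    rw [← braiding_rightUnitor y, Category.assoc, Iso.hom_inv_id, Category.comp_id]
  rw [hb]
  simp [associator_naturality_middle]

noncomputable def eIso [BraidedCategory C] (x y : C) (F : C ⥤ A) :
    (tensorLeft y ⋙ tensorLeft x ⋙ F) ≅ (tensorLeft x ⋙ tensorLeft y ⋙ F) :=
  NatIso.ofComponents
    (fun c => F.mapIso ((α_ x y c).symm ≪≫ whiskerRightIso (β_ x y) c ≪≫ α_ y x c))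
    (fun {c c'} m => by
      dsimp
      rw [← F.map_comp, ← F.map_comp]
      congr 1
      simp only [whiskerRightIso_hom]
      rw [associator_inv_naturality_right_assoc, whisker_exchange_assoc,
        associator_naturality_right]
      simp)

lemma tau_iApp_square [BraidedCategory C] (hI : IsInitial (𝟙_ C)) (x y : C) (F : C ⥤ A) :
    (tauF A y).map (iApp hI x F) ≫ (eIso x y F).hom = iApp hI x ((tauF A y).obj F) := by
  ext c
  dsimp [tauF, iApp, eIso]
  rw [← F.map_comp]
  congr 1
  simpa only [Category.assoc, whiskerRightIso_hom] using key hI x y c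

noncomputable def tauDeltaIso [BraidedCategory C] (hI : IsInitial (𝟙_ C)) (x y : C)
    (F : C ⥤ A) :
    (tauF A y).obj ((deltaF hI x).obj F) ≅ (deltaF hI x).obj ((tauF A y).obj F) :=
  (tauF A y).mapIso (deltaObjIso hI x F) ≪≫
    PreservesCokernel.iso (tauF A y) (iApp hI x F) ≪≫
    cokernel.mapIso _ (iApp hI x ((tauF A y).obj F)) (Iso.refl _) (eIso x y F)
      (by rw [Iso.refl_hom, Category.id_comp]; exact tau_iApp_square hI x y F) ≪≫
    (deltaObjIso hI x ((tauF A y).obj F)).symm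

lemma polAux_tau [BraidedCategory C] (hI : IsInitial (𝟙_ C)) :
    ∀ (n : ℕ) (F : C ⥤ A) (y : C), PolAux hI n F → PolAux hI n ((tauF A y).obj F)
  | 0, F, y, h => by
      rw [polAux_zero] at h ⊢
      rw [Functor.isZero_iff] at h ⊢
      intro c
      exact h (y ⊗ c)
  | n + 1, F, y, h => fun x =>
      polAux_of_iso hI n (tauDeltaIso hI x y F)
        (polAux_tau hI n ((deltaF hI x).obj F) y (h x))

end PolClosureAux

namespace PolClosureAux

variable {C : Type*} [Category C] [MonoidalCategory C]
variable {A : Type*} [Category A] [Abelian A]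

lemma polAux_quot_ext (hI : IsInitial (𝟙_ C)) (n : ℕ) :
    (∀ (F G : C ⥤ A) (p : F ⟶ G), Epi p → PolAux hI n F → PolAux hI n G) ∧
    (∀ S : ShortComplex (C ⥤ A), S.ShortExact →
      PolAux hI n S.X₁ → PolAux hI n S.X₃ → PolAux hI n S.X₂) := by
  induction n with
  | zero =>
    constructor
    · intro F G p hp hF
      rw [polAux_zero] at hF ⊢
      exact IsZero.of_epi_eq_zero p (hF.eq_zero_of_src p)
    · intro S hS h1 h3
      rw [polAux_zero] at h1 h3 ⊢
      have hg : S.g = 0 := h3.eq_zero_of_tgt _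
      have hf : Epi S.f := hS.exact.epi_f hg
      exact IsZero.of_epi_eq_zero S.f (h1.eq_zero_of_src S.f)
  | succ n ih =>
    constructor
    · intro F G p hp hF x
      have : Epi p := hp
      have hwl : Epi ((tauF A x).map p) := by
        apply NatTrans.epi_of_epi_app
      have comm : iApp hI x F ≫ (tauF A x).map p = p ≫ iApp hI x G := by
        ext c; exact p.naturality _
      have hq : Epi (cokernel.map (iApp hI x F) (iApp hI x G) p ((tauF A x).map p) comm) := by
        have h : cokernel.π (iApp hI x F) ≫
            cokernel.map (iApp hI x F) (iApp hI x G) p ((tauF A x).map p) comm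
            = (tauF A x).map p ≫ cokernel.π (iApp hI x G) := by simp; rfl
        have h2 : Epi (cokernel.π (iApp hI x F) ≫
            cokernel.map (iApp hI x F) (iApp hI x G) p ((tauF A x).map p) comm) := by
          rw [h]; exact epi_comp' hwl (by unfold cokernel.π; exact coequalizer.π_epi)
        exact epi_of_epi (cokernel.π (iApp hI x F)) _
      exact polAux_of_iso hI n (deltaObjIso hI x G).symm
        (ih.1 _ _ _ hq (polAux_of_iso hI n (deltaObjIso hI x F) (hF x)))
    · intro S hS h1 h3 x
      have hT : (S.map (tauF A x)).ShortExact := hS.map_of_exact (tauF A x)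
      let v : S ⟶ S.map (tauF A x) :=
        { τ₁ := iApp hI x S.X₁
          τ₂ := iApp hI x S.X₂
          τ₃ := iApp hI x S.X₃
          comm₁₂ := by ext c; exact S.f.naturality _
          comm₂₃ := by ext c; exact S.g.naturality _ }
      have hSg : Epi S.g := hS.epi_g
      have hTg : Epi (S.map (tauF A x)).g := hT.epi_g
      have hrow := row_exact v hSg hT.exact hTg
      have hq2 : Epi (rq2 v) := rq2_epi v hTg
      have hker : PolAux hI n (kernel (rq2 v)) := by
        have hepi : Epi ((ShortComplex.mk (rq1 v) (rq2 v) (rq_w v)).toCycles ≫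
            (ShortComplex.mk (rq1 v) (rq2 v) (rq_w v)).cyclesIsoKernel.hom) := by
          have := hrow.epi_toCycles
          exact epi_comp _ _
        exact ih.1 _ _ _ hepi (polAux_of_iso hI n (deltaObjIso hI x S.X₁) (h1 x))
      have hS2 : (ShortComplex.mk (kernel.ι (rq2 v)) (rq2 v) (kernel.condition _)).ShortExact :=
        { exact := ShortComplex.exact_of_f_is_kernel _ (kernelIsKernel _)
          mono_f := inferInstance
          epi_g := hq2 }
      have h2 := ih.2 _ hS2 hker (polAux_of_iso hI n (deltaObjIso hI x S.X₃) (h3 x))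
      exact polAux_of_iso hI n (deltaObjIso hI x S.X₂).symm h2

end PolClosureAux
/-- `Pol_n` is closed under translation, quotients and extensions. -/
theorem pol_closure [BraidedCategory C] (hI : IsInitial (𝟙_ C)) (n : ℕ) :
    (∀ (F : C ⥤ A) (x : C), Pol hI n F → Pol hI n ((tauF A x).obj F)) ∧
    (∀ (F G : C ⥤ A) (p : F ⟶ G), Epi p → Pol hI n F → Pol hI n G) ∧
    (∀ S : ShortComplex (C ⥤ A), S.ShortExact →
      Pol hI n S.X₁ → Pol hI n S.X₃ → Pol hI n S.X₂) := by
  have hn : ((n : ℤ) + 1).toNat = n + 1 := by omega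
  refine ⟨fun F x hF => ?_, fun F G p hp hF => ?_, fun S hS h1 h3 => ?_⟩
  · simp only [Pol, hn] at hF ⊢
    exact PolClosureAux.polAux_tau hI (n + 1) F x hF
  · simp only [Pol, hn] at hF ⊢
    exact (PolClosureAux.polAux_quot_ext hI (n + 1)).1 F G p hp hF
  · simp only [Pol, hn] at h1 h3 ⊢
    exact (PolClosureAux.polAux_quot_ext hI (n + 1)).2 S hS h1 h3
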